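/- Let k ≥ 1 and let x, y ∈ A* be two k-binomially equivalent words. For every integer n ≥ 0 and every word e ∈ A* of length k+1, one has (as integers) C(x^n, e) − C(y^n, e) = n·(C(x, e) − C(y, e)). In particular, for every n ≥ 1, x ∼_{k+1} y if and only if x^n ∼_{k+1} y^n. -/

import Mathlib

/-- The number of occurrences of `w` as a (scattered) subword of `u`:
the binomial coefficient of the words `u` and `w`. -/
def wordBinom {A : Type*} [DecidableEq A] (u w : List A) : ℕ := u.sublists.count w

/-- `k`-binomial equivalence of finite words: all binomial coefficients with respect to
words of length at most `k` agree. -/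
def BinEquiv {A : Type*} [DecidableEq A] (k : ℕ) (u v : List A) : Prop :=
  ∀ x : List A, x.length ≤ k → wordBinom u x = wordBinom v x

/-- `k`-binomial equivalence as a setoid. -/
def binSetoid (A : Type*) [DecidableEq A] (k : ℕ) : Setoid (List A) where
  r := BinEquiv k
  iseqv := ⟨fun _ _ _ => rfl, fun h x hx => (h x hx).symm,
    fun h h' x hx => (h x hx).trans (h' x hx)⟩

/-- `u` occurs in the infinite word `x` at position `i`. -/
def OccursAt {A : Type*} (u : List A) (x : ℕ → A) (i : ℕ) : Prop :=
  u = (List.range u.length).map (fun j => x (i + j))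

/-- `u` is a factor of the infinite word `x`. -/
def FactorOf {A : Type*} (u : List A) (x : ℕ → A) : Prop := ∃ i, OccursAt u x i

/-- The set of length-`n` factors of `x`. -/
def Fac {A : Type*} (x : ℕ → A) (n : ℕ) : Set (List A) :=
  {u | u.length = n ∧ FactorOf u x}

/-- Factor complexity of an infinite word. -/
noncomputable def fc {A : Type*} (x : ℕ → A) (n : ℕ) : ℕ := (Fac x n).ncard

/-- `k`-binomial complexity of an infinite word: the number of `k`-binomial equivalence
classes of length-`n` factors. -/
noncomputable def bc {A : Type*} [DecidableEq A] (x : ℕ → A) (k n : ℕ) : ℕ :=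
  (Quotient.mk (binSetoid A k) '' Fac x n).ncard

section Aux

variable {A : Type*} [DecidableEq A]

/-- Instance-free count. -/
def icount {B : Type*} [DecidableEq B] (a : B) (l : List B) : ℕ :=
  (l.map (fun x => if x = a then 1 else 0)).sum

lemma count_eq_icount {B : Type*} [DecidableEq B] [BEq B] [LawfulBEq B] (a : B) (l : List B) :
    l.count a = icount a l := by
  induction l with
  | nil => simp [icount]
  | cons b t ih =>
    simp only [List.count_cons, icount, List.map_cons, List.sum_cons, beq_iff_eq] at *
    omega

lemma wordBinom_eq_icount (u w : List A) : wordBinom u w = icount w u.sublists :=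
  count_eq_icount w u.sublists

lemma icount_append {B : Type*} [DecidableEq B] (a : B) (s t : List B) :
    icount a (s ++ t) = icount a s + icount a t := by
  simp [icount]

lemma icount_flatMap {B C : Type*} [DecidableEq C] (a : C) (l : List B) (f : B → List C) :
    icount a (l.flatMap f) = (l.map (fun x => icount a (f x))).sum := by
  induction l with
  | nil => simp [icount]
  | cons b t ih => simp [List.flatMap_cons, icount_append, ih]

lemma sum_map_mul_left' {B : Type*} (c : ℕ) (f : B → ℕ) (l : List B) :
    (l.map (fun x => c * f x)).sum = c * (l.map f).sum := by
  induction l with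
  | nil => simp
  | cons b t ih => simp [ih, mul_add]

lemma sum_swap_list {B : Type*} (l : List B) (s : Finset ℕ) (f : ℕ → B → ℕ) :
    ∑ i ∈ s, (l.map (f i)).sum = (l.map (fun x => ∑ i ∈ s, f i x)).sum := by
  induction l with
  | nil => simp
  | cons b t ih => simp [Finset.sum_add_distrib, ih]

lemma icount_nil_sublists (u : List A) : icount ([] : List A) u.sublists = 1 := by
  induction u with
  | nil => simp [icount]
  | cons a l ih =>
    rw [List.sublists_cons, List.bind_eq_flatMap, icount_flatMap]
    have : (l.sublists.map (fun x => icount ([] : List A) [x, a :: x]))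
        = l.sublists.map (fun x => if x = ([] : List A) then 1 else 0) := by
      refine List.map_congr_left fun x _ => ?_
      simp [icount]
    rw [this]
    exact ih

lemma wordBinom_nil (u : List A) : wordBinom u ([] : List A) = 1 := by
  rw [wordBinom_eq_icount]; exact icount_nil_sublists u

lemma wordBinom_append (u v w : List A) :
    wordBinom (u ++ v) w =
      ∑ i ∈ Finset.range (w.length + 1), wordBinom u (w.take i) * wordBinom v (w.drop i) := by
  simp only [wordBinom_eq_icount]
  rw [List.sublists_append, List.bind_eq_flatMap, icount_flatMap]
  have key : ∀ x : List A, icount w (u.sublists.map (· ++ x))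
      = ∑ i ∈ Finset.range (w.length + 1),
          icount (w.take i) u.sublists * (if x = w.drop i then 1 else 0) := by
    intro x
    by_cases hx : x <:+ w
    · obtain ⟨p, hp⟩ := hx
      have htake : w.take p.length = p := by rw [← hp]; simp
      have hdrop : w.drop p.length = x := by rw [← hp]; simp
      have hcount : icount w (u.sublists.map (· ++ x)) = icount p u.sublists := by
        unfold icount
        rw [List.map_map]
        refine congrArg _ (List.map_congr_left fun s _ => ?_)
        simp only [Function.comp_apply]
        congr 1
        rw [← hp]
        exact propext ⟨fun h => List.append_left_injective x h, fun h => by rw [h]⟩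
      rw [hcount, Finset.sum_eq_single p.length]
      · rw [htake, hdrop, if_pos rfl, mul_one]
      · intro i hi hne
        rw [if_neg, mul_zero]
        intro hxe
        apply hne
        have h1 : x.length = w.length - i := by rw [hxe]; simp
        have hlen : p.length + x.length = w.length := by rw [← hp]; simp
        simp only [Finset.mem_range] at hi
        omega
      · intro hmem
        have hip : p.length ≤ w.length := by rw [← hp]; simp
        exact absurd (Finset.mem_range.mpr (by omega)) hmem
    · rw [Finset.sum_eq_zero]
      · unfold icount
        rw [List.map_map]
        have : ∀ s ∈ u.sublists, ((fun x_1 => if x_1 = w then 1 else 0) ∘ fun s => s ++ x) s = 0 := by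
          intro s _
          simp only [Function.comp_apply, ite_eq_right_iff]
          intro hsw
          exact absurd ⟨s, hsw⟩ hx
        rw [List.map_congr_left this]
        simp
      · intro i hi
        rw [if_neg, mul_zero]
        intro hxe
        exact hx (hxe ▸ List.drop_suffix i w)
  rw [List.map_congr_left (fun x _ => key x), ← sum_swap_list]
  refine Finset.sum_congr rfl fun i _ => ?_
  rw [sum_map_mul_left']
  rfl


variable {A : Type*} [DecidableEq A]



lemma binEquiv_append {k : ℕ} {u u' v v' : List A} (hu : BinEquiv k u u')
    (hv : BinEquiv k v v') : BinEquiv k (u ++ v) (u' ++ v') := by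
  intro w hw
  rw [wordBinom_append, wordBinom_append]
  refine Finset.sum_congr rfl fun i _ => ?_
  rw [hu _ (le_trans (by simpa using List.length_take_le i w) hw),
    hv _ (le_trans ((List.length_drop (i := i) (l := w)) ▸ Nat.sub_le _ _) hw)]

lemma binEquiv_pow {k : ℕ} {x y : List A} (h : BinEquiv k x y) (n : ℕ) :
    BinEquiv k (List.replicate n x).flatten (List.replicate n y).flatten := by
  induction n with
  | zero => intro w _; rfl
  | succ n ih =>
    simp only [List.replicate_succ, List.flatten_cons]
    exact binEquiv_append h ih

end Aux

theorem binomial_coeff_powers {A : Type*} [DecidableEq A] (k : ℕ) (hk : 1 ≤ k)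
    (x y : List A) (h : BinEquiv k x y) :
    (∀ (n : ℕ) (e : List A), e.length = k + 1 →
      (wordBinom (List.replicate n x).flatten e : ℤ)
          - (wordBinom (List.replicate n y).flatten e : ℤ)
        = n * ((wordBinom x e : ℤ) - (wordBinom y e : ℤ))) ∧
    (∀ n : ℕ, 1 ≤ n →
      (BinEquiv (k + 1) x y ↔
        BinEquiv (k + 1) (List.replicate n x).flatten (List.replicate n y).flatten)) := by
  have main : ∀ (n : ℕ) (e : List A), e.length = k + 1 →
      (wordBinom (List.replicate n x).flatten e : ℤ)
          - (wordBinom (List.replicate n y).flatten e : ℤ)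
        = n * ((wordBinom x e : ℤ) - (wordBinom y e : ℤ)) := by
    intro n
    induction n with
    | zero =>
      intro e he
      have hne : e ≠ [] := by intro h0; rw [h0] at he; simp at he
      simp only [List.replicate_zero, List.flatten_nil, Nat.cast_zero, zero_mul]
      have : wordBinom ([] : List A) e = 0 := by
        simp [wordBinom, List.count_eq_zero, hne]
      rw [this]; simp
    | succ n ih =>
      intro e he
      have hx1 : wordBinom (List.replicate (n+1) x).flatten e
          = ∑ i ∈ Finset.range (e.length + 1),
              wordBinom x (e.take i) * wordBinom (List.replicate n x).flatten (e.drop i) := by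
        rw [List.replicate_succ, List.flatten_cons, wordBinom_append]
      have hy1 : wordBinom (List.replicate (n+1) y).flatten e
          = ∑ i ∈ Finset.range (e.length + 1),
              wordBinom y (e.take i) * wordBinom (List.replicate n y).flatten (e.drop i) := by
        rw [List.replicate_succ, List.flatten_cons, wordBinom_append]
      rw [hx1, hy1, he]
      push_cast
      rw [← Finset.sum_sub_distrib]
      set f : ℕ → ℤ := fun i =>
        (wordBinom x (e.take i) : ℤ) * (wordBinom (List.replicate n x).flatten (e.drop i) : ℤ)
        - (wordBinom y (e.take i) : ℤ) * (wordBinom (List.replicate n y).flatten (e.drop i) : ℤ)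
        with hf
      have hmid : ∀ i ∈ Finset.range k, f (i + 1) = 0 := by
        intro i hi
        simp only [Finset.mem_range] at hi
        have htl : (e.take (i+1)).length ≤ k := by
          simp only [List.length_take, he]; omega
        have hdl : (e.drop (i+1)).length ≤ k := by
          simp only [List.length_drop, he]; omega
        rw [hf]
        simp only
        rw [h _ htl, binEquiv_pow h n _ hdl]
        ring
      have hsum : ∑ i ∈ Finset.range (k + 1 + 1), f i = f 0 + f (k + 1) := by
        rw [Finset.sum_range_succ, Finset.sum_range_succ']
        rw [Finset.sum_eq_zero hmid]
        ring
      rw [hsum, hf]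
      simp only [List.take_zero, List.drop_zero]
      have hdk : e.drop (k+1) = [] := by
        apply List.drop_eq_nil_of_le; omega
      have htk : e.take (k+1) = e := by
        apply List.take_of_length_le; omega
      rw [hdk, htk, wordBinom_nil, wordBinom_nil, wordBinom_nil, wordBinom_nil]
      push_cast
      rw [one_mul, one_mul, mul_one, mul_one, ih e he]
      ring
  refine ⟨main, fun n hn => ⟨fun h1 w hw => ?_, fun h2 w hw => ?_⟩⟩
  · rcases Nat.lt_or_ge w.length (k + 1) with hlt | hge
    · exact binEquiv_pow h n w (by omega)
    · have hwl : w.length = k + 1 := by omega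
      have := main n w hwl
      rw [h1 w hw, sub_self, mul_zero, sub_eq_zero] at this
      exact_mod_cast this
  · rcases Nat.lt_or_ge w.length (k + 1) with hlt | hge
    · exact h w (by omega)
    · have hwl : w.length = k + 1 := by omega
      have hm := main n w hwl
      rw [h2 w hw, sub_self] at hm
      have hd : (wordBinom x w : ℤ) - (wordBinom y w : ℤ) = 0 := by
        rcases mul_eq_zero.mp hm.symm with h0 | h0
        · exfalso; have : (n : ℤ) ≠ 0 := by exact_mod_cast Nat.one_le_iff_ne_zero.mp hn
          exact this h0
        · exact h0
      have := sub_eq_zero.mp hd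
      exact_mod_cast this
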